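/- The number 5 is a base-4 repunit prime (it satisfies 3·5 + 1 = 4^2), yet 1/5 does not belong to the middle-quarter Cantor set C₄. -/

import Mathlib

/-- One step of the middle-(1/N) Cantor construction: the two affine images
with ratio `r` keeping the left and right parts of each set. -/
def cantorStepMid (r : ℝ) (S : Set ℝ) : Set ℝ :=
  (fun x => r * x) '' S ∪ (fun x => r * x + (1 - r)) '' S

/-- The middle-(1/N) Cantor set: start from [0,1], repeatedly remove from each
closed interval the open middle interval of relative length 1/N, and intersect. -/
def cantorMiddle (N : ℕ) : Set ℝ :=
  ⋂ n : ℕ, (cantorStepMid (((N : ℝ) - 1) / (2 * N)))^[n] (Set.Icc 0 1)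

theorem stmt_10 :
    Nat.Prime 5 ∧ (∃ q : ℕ, q.Prime ∧ (4 - 1) * 5 + 1 = 4 ^ q) ∧
    (1 / (5 : ℝ)) ∉ cantorMiddle 4 := by
  refine ⟨by norm_num, ⟨2, by norm_num, by norm_num⟩, ?_⟩
  intro h
  have h2 := Set.mem_iInter.mp h 2
  simp only [Function.iterate_succ, Function.iterate_zero, Function.comp_apply, id_eq,
    cantorStepMid, Set.mem_union, Set.mem_image, Set.mem_Icc] at h2
  norm_num at h2
  rcases h2 with ⟨x, ⟨⟨y, ⟨hy0, hy1⟩, hx⟩ | ⟨y, ⟨hy0, hy1⟩, hx⟩, hr⟩⟩ |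
    ⟨x, ⟨⟨y, ⟨hy0, hy1⟩, hx⟩ | ⟨y, ⟨hy0, hy1⟩, hx⟩, hr⟩⟩ <;> linarith
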